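/- Fix a > 0. Let ν be a Borel probability measure on ℝⁿ satisfying ν(B_r) ≲ r^a for every ball B_r of radius r. If A ⊂ ℝⁿ satisfies ν(A) ≥ κ > 0, then for every δ > 0 there exists a finite subset F ⊂ A that is δ-separated, satisfies #(F ∩ B_r(x)) ≲ (r/δ)^a for all x ∈ ℝⁿ and δ ≤ r ≤ 1, and has cardinality #F ≳ κ δ^{−a}. -/

import Mathlib

open Metric Set MeasureTheory
open scoped ENNReal

noncomputable section

abbrev Eucl (n : ℕ) := EuclideanSpace ℝ (Fin n)

/-- `F` is a `(δ,s)`-set with counting constant `C`: it is `δ`-separated and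
`#(F ∩ B_r(x)) ≤ C (r/δ)^s` for all `x` and all `δ ≤ r ≤ 1`. -/
def IsDeltaSet {α : Type*} [PseudoMetricSpace α] (δ s C : ℝ) (F : Finset α) : Prop :=
  (∀ x ∈ F, ∀ y ∈ F, x ≠ y → δ ≤ dist x y) ∧
  ∀ (x : α) (r : ℝ), δ ≤ r → r ≤ 1 →
    (((F : Set α) ∩ closedBall x r).ncard : ℝ) ≤ C * (r / δ) ^ s

namespace FrostmanAux

variable {n : ℕ}

def idx (δ : ℝ) (j : ℕ) (x : Eucl n) : Fin n → ℤ := fun i => ⌊x i / (δ * 2 ^ j)⌋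

lemma coord_le_dist (x y : Eucl n) (i : Fin n) : |x i - y i| ≤ dist x y := by
  rw [EuclideanSpace.dist_eq]
  rw [← Real.sqrt_sq_eq_abs]
  apply Real.sqrt_le_sqrt
  calc (x i - y i) ^ 2 = dist (x i) (y i) ^ 2 := by rw [Real.dist_eq, sq_abs]
    _ ≤ ∑ k, dist (x k) (y k) ^ 2 :=
      Finset.single_le_sum (f := fun k => dist (x k) (y k) ^ 2) (fun k _ => sq_nonneg _) (Finset.mem_univ i)

lemma floor_div_nat (s : ℝ) (hs : 0 < s) (k : ℕ) (hk : 0 < k) (x : ℝ) :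
    ⌊x / (s * k)⌋ = ⌊((⌊x / s⌋ : ℤ) : ℝ) / (k : ℝ)⌋ := by
  have hk' : (0:ℝ) < k := by exact_mod_cast hk
  have hsk : (0:ℝ) < s * k := by positivity
  set p : ℤ := ⌊x / s⌋ with hp
  set q : ℤ := ⌊(p : ℝ) / (k : ℝ)⌋ with hq
  have hq1 : (q:ℝ) ≤ (p:ℝ) / k := Int.floor_le _
  have hq2 : (p:ℝ) / k < q + 1 := Int.lt_floor_add_one _
  have hp1 : (p:ℝ) ≤ x / s := Int.floor_le _
  have hp2 : x / s < p + 1 := Int.lt_floor_add_one _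
  have h1 : (q:ℝ) * k ≤ p := by
    rw [← le_div_iff₀ hk']; exact hq1
  have h2 : (p:ℝ) < (q+1) * k := by
    rw [← div_lt_iff₀ hk']; exact hq2
  have h2' : p < (q+1) * k := by exact_mod_cast h2
  have h3 : (p:ℤ) + 1 ≤ (q+1) * k := h2'
  rw [Int.floor_eq_iff]
  constructor
  · rw [le_div_iff₀ hsk]
    calc (q:ℝ) * (s * k) = ((q:ℝ) * k) * s := by ring
      _ ≤ (p:ℝ) * s := by nlinarith
      _ ≤ x := by
          rw [← le_div_iff₀ hs]; exact hp1
  · rw [div_lt_iff₀ hsk]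
    have h4 : x < ((p:ℝ) + 1) * s := by rw [← div_lt_iff₀ hs]; exact hp2
    have h5 : ((p:ℝ) + 1) ≤ ((q:ℝ) + 1) * k := by exact_mod_cast h3
    calc x < ((p:ℝ)+1) * s := h4
      _ ≤ (((q:ℝ)+1) * k) * s := by nlinarith
      _ = ((q:ℝ)+1) * (s * k) := by ring

lemma idx_succ (δ : ℝ) (hδ : 0 < δ) (j : ℕ) (x : Eucl n) (i : Fin n) :
    idx δ (j+1) x i = ⌊((idx δ j x i : ℤ) : ℝ) / 2⌋ := by
  have hs : (0:ℝ) < δ * 2 ^ j := by positivity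
  have : δ * 2 ^ (j+1) = (δ * 2 ^ j) * ((2:ℕ):ℝ) := by push_cast; ring
  simp only [idx, this]
  rw [floor_div_nat _ hs 2 (by norm_num)]
  norm_num

lemma idx_determines (δ : ℝ) (hδ : 0 < δ) {j j' : ℕ} (h : j' ≤ j) {x y : Eucl n}
    (hxy : idx δ j' x = idx δ j' y) : idx δ j x = idx δ j y := by
  induction j, h using Nat.le_induction with
  | base => exact hxy
  | succ j hj ih =>
      funext i
      rw [idx_succ δ hδ j x i, idx_succ δ hδ j y i, ih]


lemma half_floor (m k : ℤ) : ⌊((k:ℤ):ℝ)/2⌋ = m ↔ k = 2*m ∨ k = 2*m+1 := by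
  rw [Int.floor_eq_iff]
  constructor
  · rintro ⟨h1, h2⟩
    have h1' : (2*(m:ℝ)) ≤ (k:ℝ) := by linarith
    have h2' : (k:ℝ) < 2*(m:ℝ) + 2 := by linarith
    have h1'' : 2*m ≤ k := by exact_mod_cast h1'
    have h2'' : k < 2*m+2 := by exact_mod_cast h2'
    omega
  · rintro (rfl | rfl) <;> constructor <;> push_cast <;> linarith

open scoped Classical in
lemma key (a C₂ δ : ℝ) (ha : 0 < a) (hC₂ : 0 < C₂) (hδ : 0 < δ)
    (ν : Measure (Eucl n)) [IsFiniteMeasure ν]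
    (hcube : ∀ (j : ℕ) (z : Fin n → ℤ),
      (ν {x : Eucl n | idx δ j x = z}).toReal ≤ C₂ * (((2:ℝ) ^ j) ^ a * δ ^ a))
    (A : Set (Eucl n)) (j : ℕ) :
    ∀ z : Fin n → ℤ,
    ∃ F : Finset (Eucl n), (↑F : Set (Eucl n)) ⊆ A ∩ {x | idx δ j x = z} ∧
      (∀ x ∈ F, ∀ y ∈ F, idx δ 0 x = idx δ 0 y → x = y) ∧
      (∀ j' ≤ j, ∀ z' : Fin n → ℤ,
        ((F.filter (fun x => idx δ j' x = z')).card : ℝ) ≤ 2 * ((2:ℝ) ^ j') ^ a) ∧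
      (ν (A ∩ {x | idx δ j x = z})).toReal ≤ C₂ * F.card * δ ^ a := by
  induction j with
  | zero =>
    intro z
    by_cases hA : (A ∩ {x | idx δ 0 x = z}).Nonempty
    · obtain ⟨x₀, hx₀⟩ := hA
      refine ⟨{x₀}, by simpa using hx₀, by simp, ?_, ?_⟩
      · intro j' hj' z'
        interval_cases j'
        have h1 : ((Finset.filter (fun x => idx δ 0 x = z') {x₀}).card : ℝ) ≤ 1 := by
          have := Finset.card_filter_le ({x₀} : Finset (Eucl n)) (fun x => idx δ 0 x = z')
          simpa using (by exact_mod_cast this : ((Finset.filter (fun x => idx δ 0 x = z') {x₀}).card : ℝ) ≤ 1)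
        have h2 : (1:ℝ) ≤ 2 * ((2:ℝ) ^ (0:ℕ)) ^ a := by
          norm_num [Real.one_rpow]
        linarith
      · have := hcube 0 z
        have hm : (ν (A ∩ {x | idx δ 0 x = z})).toReal ≤ (ν {x : Eucl n | idx δ 0 x = z}).toReal :=
          ENNReal.toReal_mono (measure_ne_top ν _) (measure_mono inter_subset_right)
        simp only [pow_zero, Real.one_rpow, one_mul] at this
        simpa using hm.trans this
    · refine ⟨∅, by simp, by simp, ?_, ?_⟩
      · intro j' hj' z'; simp; positivity
      · rw [Set.not_nonempty_iff_eq_empty] at hA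
        simp [hA]
  | succ j ih =>
    intro z
    choose Fz h1 h2 h3 h4 using ih
    have hFzA : ∀ z', (↑(Fz z') : Set (Eucl n)) ⊆ A := fun z' => (h1 z').trans inter_subset_left
    have hFzcube : ∀ z', ∀ x ∈ Fz z', idx δ j x = z' := by
      intro z' x hx
      exact ((h1 z') hx).2
    set ch : Finset (Fin n → ℤ) :=
      Fintype.piFinset (fun i => ({2 * z i, 2 * z i + 1} : Finset ℤ)) with hch
    have hmem_ch : ∀ z' : Fin n → ℤ, z' ∈ ch ↔ ∀ i, z' i = 2 * z i ∨ z' i = 2 * z i + 1 := by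
      intro z'; simp [hch, Fintype.mem_piFinset]
    have hchild_iff : ∀ x : Eucl n, idx δ (j+1) x = z ↔ idx δ j x ∈ ch := by
      intro x
      rw [hmem_ch]
      constructor
      · intro h i
        have h5 := idx_succ δ hδ j x i
        have h6 : ⌊((idx δ j x i : ℤ):ℝ)/2⌋ = z i := by rw [← h5, h]
        exact (half_floor (z i) (idx δ j x i)).mp h6
      · intro h
        funext i
        rw [idx_succ δ hδ j x i]
        exact (half_floor (z i) (idx δ j x i)).mpr (h i)
    set F' : Finset (Eucl n) := ch.biUnion Fz with hF'
    have hmemF' : ∀ x ∈ F', x ∈ Fz (idx δ j x) := by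
      intro x hx
      obtain ⟨z', hz', hxz'⟩ := Finset.mem_biUnion.mp hx
      rwa [hFzcube z' x hxz']
    have hdisj : ∀ z₁ ∈ ch, ∀ z₂ ∈ ch, z₁ ≠ z₂ → Disjoint (Fz z₁) (Fz z₂) := by
      intro z₁ _ z₂ _ hne
      rw [Finset.disjoint_left]
      intro x hx1 hx2
      exact hne ((hFzcube z₁ x hx1).symm.trans (hFzcube z₂ x hx2))
    have hsub' : (↑F' : Set (Eucl n)) ⊆ A ∩ {x | idx δ (j+1) x = z} := by
      intro x hx
      have hx' := hmemF' x hx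
      refine ⟨hFzA _ hx', ?_⟩
      have : idx δ j x ∈ ch := by
        rw [hFzcube (idx δ j x) x hx'] at hx' ⊢
        obtain ⟨z', hz', hxz'⟩ := Finset.mem_biUnion.mp hx
        rw [hFzcube z' x hxz']; exact hz'
      exact (hchild_iff x).mpr this
    have hinj' : ∀ x ∈ F', ∀ y ∈ F', idx δ 0 x = idx δ 0 y → x = y := by
      intro x hx y hy hxy
      have hj : idx δ j x = idx δ j y := idx_determines δ hδ (Nat.zero_le j) hxy
      have hx' := hmemF' x hx
      have hy' := hmemF' y hy
      rw [hj] at hx'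
      exact h2 (idx δ j y) x hx' y hy' hxy
    have hcnt' : ∀ j' ≤ j, ∀ z'' : Fin n → ℤ,
        ((F'.filter (fun x => idx δ j' x = z'')).card : ℝ) ≤ 2 * ((2:ℝ) ^ j') ^ a := by
      intro j' hj' z''
      by_cases hne : (F'.filter (fun x => idx δ j' x = z'')).Nonempty
      · obtain ⟨x₀, hx₀⟩ := hne
        rw [Finset.mem_filter] at hx₀
        have hsub2 : F'.filter (fun x => idx δ j' x = z'')
            ⊆ (Fz (idx δ j x₀)).filter (fun x => idx δ j' x = z'') := by
          intro y hy
          rw [Finset.mem_filter] at hy ⊢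
          refine ⟨?_, hy.2⟩
          have : idx δ j y = idx δ j x₀ :=
            idx_determines δ hδ hj' (hy.2.trans hx₀.2.symm)
          have := hmemF' y hy.1
          rwa [‹idx δ j y = idx δ j x₀›] at this
        calc ((F'.filter (fun x => idx δ j' x = z'')).card : ℝ)
            ≤ (((Fz (idx δ j x₀)).filter (fun x => idx δ j' x = z'')).card : ℝ) := by
              exact_mod_cast Finset.card_le_card hsub2
          _ ≤ 2 * ((2:ℝ) ^ j') ^ a := h3 (idx δ j x₀) j' hj' z''
      · rw [Finset.not_nonempty_iff_eq_empty] at hne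
        rw [hne]
        simp
        positivity
    have hcard' : F'.card = ∑ z' ∈ ch, (Fz z').card := Finset.card_biUnion hdisj
    have hmass' : (ν (A ∩ {x | idx δ (j+1) x = z})).toReal ≤ C₂ * F'.card * δ ^ a := by
      have hcover : A ∩ {x | idx δ (j+1) x = z} ⊆ ⋃ z' ∈ ch, (A ∩ {x | idx δ j x = z'}) := by
        rintro x ⟨hxA, hxc⟩
        exact Set.mem_biUnion ((hchild_iff x).mp hxc) ⟨hxA, rfl⟩
      have step1 : ν (A ∩ {x | idx δ (j+1) x = z}) ≤ ∑ z' ∈ ch, ν (A ∩ {x | idx δ j x = z'}) :=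
        (measure_mono hcover).trans (measure_biUnion_finset_le ch _)
      have hfin : (∑ z' ∈ ch, ν (A ∩ {x | idx δ j x = z'})) ≠ ⊤ :=
        ENNReal.sum_ne_top.mpr (fun _ _ => measure_ne_top ν _)
      have step2 : (ν (A ∩ {x | idx δ (j+1) x = z})).toReal
          ≤ ∑ z' ∈ ch, (ν (A ∩ {x | idx δ j x = z'})).toReal :=
        (ENNReal.toReal_mono hfin step1).trans_eq
          (ENNReal.toReal_sum (fun _ _ => measure_ne_top ν _))
      refine step2.trans ?_
      calc ∑ z' ∈ ch, (ν (A ∩ {x | idx δ j x = z'})).toReal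
          ≤ ∑ z' ∈ ch, C₂ * (Fz z').card * δ ^ a := Finset.sum_le_sum (fun z' _ => h4 z')
        _ = C₂ * F'.card * δ ^ a := by
            rw [← Finset.sum_mul, ← Finset.mul_sum, hcard']
            push_cast
            ring
    by_cases hbig : ((F'.card : ℝ) ≤ 2 * ((2:ℝ) ^ (j+1)) ^ a)
    · refine ⟨F', hsub', hinj', ?_, hmass'⟩
      intro j' hj' z''
      rcases Nat.lt_or_ge j' (j+1) with hlt | hge
      · exact hcnt' j' (Nat.lt_succ_iff.mp hlt) z''
      · have hj'' : j' = j + 1 := le_antisymm hj' hge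
        subst hj''
        calc ((F'.filter (fun x => idx δ (j+1) x = z'')).card : ℝ)
            ≤ (F'.card : ℝ) := by exact_mod_cast Finset.card_filter_le _ _
          _ ≤ 2 * ((2:ℝ) ^ (j+1)) ^ a := hbig
    · push_neg at hbig
      set k : ℕ := ⌊2 * ((2:ℝ) ^ (j+1)) ^ a⌋₊ with hk
      have hcap_pos : (0:ℝ) ≤ 2 * ((2:ℝ) ^ (j+1)) ^ a := by positivity
      have hk_le : (k:ℝ) ≤ 2 * ((2:ℝ) ^ (j+1)) ^ a := Nat.floor_le hcap_pos
      have hk_lt_card : k ≤ F'.card := by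
        have : (k:ℝ) < (F'.card : ℝ) := lt_of_le_of_lt hk_le hbig
        exact_mod_cast this.le
      obtain ⟨F, hFsub, hFcard⟩ := Finset.exists_subset_card_eq hk_lt_card
      have hX1 : (1:ℝ) ≤ ((2:ℝ) ^ (j+1)) ^ a :=
        Real.one_le_rpow (one_le_pow₀ (by norm_num)) ha.le
      have hXk : ((2:ℝ) ^ (j+1)) ^ a ≤ (k:ℝ) := by
        have h6 : 2 * ((2:ℝ) ^ (j+1)) ^ a < (k:ℝ) + 1 := Nat.lt_floor_add_one _
        linarith
      refine ⟨F, ?_, ?_, ?_, ?_⟩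
      · exact (Finset.coe_subset.mpr hFsub).trans hsub'
      · intro x hx y hy hxy
        exact hinj' x (hFsub hx) y (hFsub hy) hxy
      · intro j' hj' z''
        rcases Nat.lt_or_ge j' (j+1) with hlt | hge
        · calc ((F.filter (fun x => idx δ j' x = z'')).card : ℝ)
              ≤ ((F'.filter (fun x => idx δ j' x = z'')).card : ℝ) := by
                exact_mod_cast Finset.card_le_card (Finset.filter_subset_filter _ hFsub)
            _ ≤ 2 * ((2:ℝ) ^ j') ^ a := hcnt' j' (Nat.lt_succ_iff.mp hlt) z''
        · have hj'' : j' = j + 1 := le_antisymm hj' hge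
          subst hj''
          calc ((F.filter (fun x => idx δ (j+1) x = z'')).card : ℝ)
              ≤ (F.card : ℝ) := by exact_mod_cast Finset.card_filter_le _ _
            _ = (k : ℝ) := by rw [hFcard]
            _ ≤ 2 * ((2:ℝ) ^ (j+1)) ^ a := hk_le
      · have hm1 : (ν (A ∩ {x | idx δ (j+1) x = z})).toReal
            ≤ (ν {x : Eucl n | idx δ (j+1) x = z}).toReal :=
          ENNReal.toReal_mono (measure_ne_top ν _) (measure_mono inter_subset_right)
        have hm2 := hcube (j+1) z
        rw [hFcard]
        have hδa : (0:ℝ) < δ ^ a := Real.rpow_pos_of_pos hδ a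
        calc (ν (A ∩ {x | idx δ (j+1) x = z})).toReal
            ≤ C₂ * (((2:ℝ) ^ (j+1)) ^ a * δ ^ a) := hm1.trans hm2
          _ ≤ C₂ * k * δ ^ a := by
              rw [mul_assoc]
              exact mul_le_mul_of_nonneg_left
                (mul_le_mul_of_nonneg_right hXk hδa.le) hC₂.le



lemma cube_mass (aa C δ : ℝ) (hC : 0 < C) (ha : 0 < aa) (hδ : 0 < δ)
    (ν : Measure (Eucl n))
    (hfrost : ∀ (x : Eucl n) (r : ℝ), 0 < r → ν (closedBall x r) ≤ ENNReal.ofReal (C * r ^ aa))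
    (j : ℕ) (z : Fin n → ℤ) :
    (ν {x : Eucl n | idx δ j x = z}).toReal
      ≤ (C * ((n:ℝ)+1) ^ aa) * (((2:ℝ) ^ j) ^ aa * δ ^ aa) := by
  set s : ℝ := δ * 2 ^ j with hs
  have hspos : 0 < s := by positivity
  set pt : Eucl n := (show Eucl n from WithLp.toLp 2 (fun i => (z i : ℝ) * s)) with hpt
  have hsub : {x : Eucl n | idx δ j x = z} ⊆ closedBall pt (((n:ℝ)+1) * s) := by
    intro x hx
    rw [mem_closedBall, EuclideanSpace.dist_eq]
    have hcoord : ∀ i, dist (x i) (pt i) ^ 2 ≤ s ^ 2 := by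
      intro i
      have h := congrFun hx i
      have h1 : ((z i : ℝ)) ≤ x i / s ∧ x i / s < z i + 1 := Int.floor_eq_iff.mp h
      have h2 : (z i : ℝ) * s ≤ x i := by
        rw [← le_div_iff₀ hspos]; exact h1.1
      have h3 : x i < ((z i : ℝ) + 1) * s := by
        rw [← div_lt_iff₀ hspos]; exact h1.2
      have hpti : pt i = (z i : ℝ) * s := rfl
      rw [Real.dist_eq, sq_abs, hpti]
      nlinarith
    calc Real.sqrt (∑ i, dist (x i) (pt i) ^ 2)
        ≤ Real.sqrt (∑ _i : Fin n, s ^ 2) :=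
          Real.sqrt_le_sqrt (Finset.sum_le_sum fun i _ => hcoord i)
      _ = Real.sqrt ((n : ℝ) * s ^ 2) := by
          rw [Finset.sum_const, Finset.card_univ, Fintype.card_fin, nsmul_eq_mul]
      _ ≤ Real.sqrt ((((n:ℝ) + 1) * s) ^ 2) := Real.sqrt_le_sqrt (by nlinarith)
      _ = ((n:ℝ) + 1) * s := Real.sqrt_sq (by positivity)
  have h2 := (measure_mono hsub).trans (hfrost pt (((n:ℝ)+1) * s) (by positivity))
  have h3 : (ν {x : Eucl n | idx δ j x = z}).toReal ≤ C * ((((n:ℝ)+1)) * s) ^ aa :=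
    ENNReal.toReal_le_of_le_ofReal (by positivity) h2
  calc (ν {x : Eucl n | idx δ j x = z}).toReal ≤ C * ((((n:ℝ)+1)) * s) ^ aa := h3
    _ = (C * ((n:ℝ)+1) ^ aa) * (((2:ℝ) ^ j) ^ aa * δ ^ aa) := by
        rw [hs, Real.mul_rpow (by positivity) (by positivity),
          Real.mul_rpow (by positivity) (by positivity)]
        ring

end FrostmanAux

open FrostmanAux

set_option maxHeartbeats 1000000

/-- from a Frostman-type measure `ν` with `ν(B_r) ≤ C r^a` and
`ν(A) ≥ κ`, one extracts a `(δ,a)`-subset `F ⊆ A` with `#F ≳ κ δ^{-a}`;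
the implied constants depend only on `n`, `a` (and `C`). -/
theorem frostman_to_delta_set {n : ℕ} (a C : ℝ) (ha : 0 < a) (hC : 0 < C) :
    ∃ C₁ > (0:ℝ), ∃ c > (0:ℝ),
      ∀ (ν : Measure (Eucl n)), IsProbabilityMeasure ν →
        (∀ (x : Eucl n) (r : ℝ), 0 < r → ν (closedBall x r) ≤ ENNReal.ofReal (C * r ^ a)) →
        ∀ (A : Set (Eucl n)) (κ : ℝ), 0 < κ → ENNReal.ofReal κ ≤ ν A →
          ∀ (δ : ℝ), 0 < δ →
            ∃ F : Finset (Eucl n), (F : Set (Eucl n)) ⊆ A ∧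
              IsDeltaSet δ a C₁ F ∧ c * (κ * δ ^ (-a)) ≤ (F.card : ℝ) := by
  classical
  have hC₂ : (0:ℝ) < C * ((n:ℝ)+1) ^ a := by positivity
  set C₂ : ℝ := C * ((n:ℝ)+1) ^ a with hC₂def
  refine ⟨2 ^ (n+1) * (4:ℝ) ^ a, by positivity, (2 * C₂ * 3 ^ n)⁻¹, by positivity, ?_⟩
  intro ν hν hfrost A κ hκ hκA δ hδ
  have hcube : ∀ (j : ℕ) (z : Fin n → ℤ),
      (ν {x : Eucl n | idx δ j x = z}).toReal ≤ C₂ * (((2:ℝ) ^ j) ^ a * δ ^ a) := by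
    intro j z
    rw [hC₂def]
    exact cube_mass a C δ hC ha hδ ν hfrost j z
  obtain ⟨m, hm⟩ : ∃ m : ℕ, 2 / δ < 2 ^ m := pow_unbounded_of_one_lt (2/δ) one_lt_two
  have hm2 : (2:ℝ) < δ * 2 ^ m := by
    rw [mul_comm]; exact (div_lt_iff₀ hδ).mp hm
  -- select finitely many top cubes carrying mass ≥ κ/2
  have hκA' : ENNReal.ofReal κ ≤ ∑' z : Fin n → ℤ, ν (A ∩ {x : Eucl n | idx δ m x = z}) := by
    refine hκA.trans ?_
    refine (measure_mono ?_).trans (measure_iUnion_le _)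
    intro x hx
    exact Set.mem_iUnion.mpr ⟨idx δ m x, hx, rfl⟩
  have h2 : ENNReal.ofReal (κ/2)
      < ⨆ fs : Finset (Fin n → ℤ), ∑ z ∈ fs, ν (A ∩ {x : Eucl n | idx δ m x = z}) := by
    rw [← ENNReal.tsum_eq_iSup_sum]
    exact lt_of_lt_of_le ((ENNReal.ofReal_lt_ofReal_iff hκ).mpr (by linarith)) hκA'
  obtain ⟨fs, hfs⟩ := lt_iSup_iff.mp h2
  have h3 : κ/2 ≤ ∑ z ∈ fs, (ν (A ∩ {x : Eucl n | idx δ m x = z})).toReal := by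
    have h4 := ENNReal.toReal_mono (ENNReal.sum_ne_top.mpr fun _ _ => measure_ne_top ν _) hfs.le
    rwa [ENNReal.toReal_ofReal (by positivity),
      ENNReal.toReal_sum (fun _ _ => measure_ne_top ν _)] at h4
  -- apply the key lemma at scale m in each selected top cube
  have hkey := key a C₂ δ ha hC₂ hδ ν hcube A m
  choose Gz g1 g2 g3 g4 using hkey
  have hGcube : ∀ z', ∀ x ∈ Gz z', idx δ m x = z' := fun z' x hx => ((g1 z') hx).2
  set F₀ : Finset (Eucl n) := fs.biUnion Gz with hF₀
  have hdisj : ∀ z₁ ∈ fs, ∀ z₂ ∈ fs, z₁ ≠ z₂ → Disjoint (Gz z₁) (Gz z₂) := by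
    intro z₁ _ z₂ _ hne
    rw [Finset.disjoint_left]
    intro x hx1 hx2
    exact hne ((hGcube z₁ x hx1).symm.trans (hGcube z₂ x hx2))
  have hmemF₀ : ∀ x ∈ F₀, x ∈ Gz (idx δ m x) := by
    intro x hx
    obtain ⟨z', hz', hxz'⟩ := Finset.mem_biUnion.mp hx
    rwa [hGcube z' x hxz']
  have hsubA : (↑F₀ : Set (Eucl n)) ⊆ A := by
    intro x hx
    exact ((g1 (idx δ m x)) (hmemF₀ x hx)).1
  have hinj : ∀ x ∈ F₀, ∀ y ∈ F₀, idx δ 0 x = idx δ 0 y → x = y := by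
    intro x hx y hy hxy
    have hj : idx δ m x = idx δ m y := idx_determines δ hδ (Nat.zero_le m) hxy
    have hx' := hmemF₀ x hx
    have hy' := hmemF₀ y hy
    rw [hj] at hx'
    exact g2 (idx δ m y) x hx' y hy' hxy
  have hcnt : ∀ j', j' ≤ m → ∀ z'' : Fin n → ℤ,
      ((F₀.filter (fun x => idx δ j' x = z'')).card : ℝ) ≤ 2 * ((2:ℝ) ^ j') ^ a := by
    intro j' hj' z''
    by_cases hne : (F₀.filter (fun x => idx δ j' x = z'')).Nonempty
    · obtain ⟨x₀, hx₀⟩ := hne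
      rw [Finset.mem_filter] at hx₀
      have hsub2 : F₀.filter (fun x => idx δ j' x = z'')
          ⊆ (Gz (idx δ m x₀)).filter (fun x => idx δ j' x = z'') := by
        intro y hy
        rw [Finset.mem_filter] at hy ⊢
        refine ⟨?_, hy.2⟩
        have heq : idx δ m y = idx δ m x₀ := idx_determines δ hδ hj' (hy.2.trans hx₀.2.symm)
        have := hmemF₀ y hy.1
        rwa [heq] at this
      calc ((F₀.filter (fun x => idx δ j' x = z'')).card : ℝ)
          ≤ (((Gz (idx δ m x₀)).filter (fun x => idx δ j' x = z'')).card : ℝ) := by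
            exact_mod_cast Finset.card_le_card hsub2
        _ ≤ 2 * ((2:ℝ) ^ j') ^ a := g3 (idx δ m x₀) j' hj' z''
    · rw [Finset.not_nonempty_iff_eq_empty] at hne
      rw [hne]
      simp
      positivity
  have hcard : κ/2 ≤ C₂ * F₀.card * δ ^ a := by
    refine h3.trans ?_
    calc ∑ z ∈ fs, (ν (A ∩ {x : Eucl n | idx δ m x = z})).toReal
        ≤ ∑ z ∈ fs, C₂ * (Gz z).card * δ ^ a := Finset.sum_le_sum (fun z _ => g4 z)
      _ = C₂ * F₀.card * δ ^ a := by
          rw [← Finset.sum_mul, ← Finset.mul_sum, hF₀, Finset.card_biUnion hdisj]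
          push_cast
          ring
  -- parity classes mod 3
  set cl : Eucl n → (Fin n → ZMod 3) := fun x i => ((idx δ 0 x i : ℤ) : ZMod 3) with hcl
  have hsum : F₀.card = ∑ c ∈ Finset.univ, (F₀.filter (fun x => cl x = c)).card :=
    Finset.card_eq_sum_card_fiberwise (fun x _ => Finset.mem_univ _)
  have hcardu : ((Finset.univ : Finset (Fin n → ZMod 3))).card = 3 ^ n := by
    simp [Finset.card_univ, Fintype.card_fun]
  obtain ⟨cc, _, hcc⟩ := Finset.exists_le_of_sum_le
    (s := (Finset.univ : Finset (Fin n → ZMod 3)))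
    (f := fun _ => (F₀.card : ℝ) / 3 ^ n)
    (g := fun c => ((F₀.filter (fun x => cl x = c)).card : ℝ))
    Finset.univ_nonempty
    (by
      have hRHS : ∑ c ∈ (Finset.univ : Finset (Fin n → ZMod 3)),
          ((F₀.filter (fun x => cl x = c)).card : ℝ) = (F₀.card : ℝ) := by
        rw [hsum]; push_cast; ring
      rw [hRHS, Finset.sum_const, hcardu, nsmul_eq_mul]
      have h3n : (0:ℝ) < 3 ^ n := by positivity
      push_cast
      field_simp
      exact le_rfl)
  set Ffin : Finset (Eucl n) := F₀.filter (fun x => cl x = cc) with hFfin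
  have hFfinsub : Ffin ⊆ F₀ := Finset.filter_subset _ _
  refine ⟨Ffin, ?_, ⟨?_, ?_⟩, ?_⟩
  · intro x hx
    exact hsubA (hFfinsub hx)
  · -- separation
    intro x hx y hy hxy
    have hx0 : x ∈ F₀ := hFfinsub hx
    have hy0 : y ∈ F₀ := hFfinsub hy
    have hclx : cl x = cc := (Finset.mem_filter.mp hx).2
    have hcly : cl y = cc := (Finset.mem_filter.mp hy).2
    have hne : idx δ 0 x ≠ idx δ 0 y := fun h => hxy (hinj x hx0 y hy0 h)
    obtain ⟨i, hi⟩ := Function.ne_iff.mp hne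
    have hzm : ((idx δ 0 x i : ℤ) : ZMod 3) = ((idx δ 0 y i : ℤ) : ZMod 3) :=
      congrFun (hclx.trans hcly.symm) i
    have hdvd : ((3:ℕ) : ℤ) ∣ idx δ 0 y i - idx δ 0 x i :=
      (ZMod.intCast_eq_intCast_iff_dvd_sub _ _ _).mp hzm
    have hdvd' : (3:ℤ) ∣ idx δ 0 y i - idx δ 0 x i := by exact_mod_cast hdvd
    have h3cases : idx δ 0 y i - idx δ 0 x i ≥ 3 ∨ idx δ 0 y i - idx δ 0 x i ≤ -3 := by
      rcases hdvd' with ⟨t, ht⟩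
      have : idx δ 0 x i ≠ idx δ 0 y i := hi
      omega
    have hb : ∀ w : Eucl n, ((idx δ 0 w i : ℤ) : ℝ) * δ ≤ w i
        ∧ w i < (((idx δ 0 w i : ℤ) : ℝ) + 1) * δ := by
      intro w
      have hd0 : δ * (2:ℝ) ^ (0:ℕ) = δ := by norm_num
      have h1 : ((idx δ 0 w i : ℤ) : ℝ) ≤ w i / δ := by
        have h1' : ((idx δ 0 w i : ℤ) : ℝ) ≤ w i / (δ * 2 ^ (0:ℕ)) := Int.floor_le _
        rwa [hd0] at h1'
      have h2 : w i / δ < ((idx δ 0 w i : ℤ) : ℝ) + 1 := by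
        have h2' : w i / (δ * 2 ^ (0:ℕ)) < ((idx δ 0 w i : ℤ) : ℝ) + 1 := Int.lt_floor_add_one _
        rwa [hd0] at h2'
      constructor
      · rw [← le_div_iff₀ hδ]; exact h1
      · rw [← div_lt_iff₀ hδ]; exact h2
    obtain ⟨hx1, hx2⟩ := hb x
    obtain ⟨hy1, hy2⟩ := hb y
    have hsep2 : 2 * δ ≤ |x i - y i| := by
      rcases h3cases with h | h
      · have hge : ((idx δ 0 y i : ℤ) : ℝ) ≥ ((idx δ 0 x i : ℤ) : ℝ) + 3 := by
          have : idx δ 0 y i ≥ idx δ 0 x i + 3 := by omega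
          exact_mod_cast this
        refine le_abs.mpr (Or.inr ?_)
        nlinarith
      · have hge : ((idx δ 0 x i : ℤ) : ℝ) ≥ ((idx δ 0 y i : ℤ) : ℝ) + 3 := by
          have : idx δ 0 x i ≥ idx δ 0 y i + 3 := by omega
          exact_mod_cast this
        refine le_abs.mpr (Or.inl ?_)
        nlinarith
    have hcd := coord_le_dist x y i
    linarith
  · -- counting
    intro x r hδr hr1
    have hex : ∃ j : ℕ, 2 * r ≤ δ * 2 ^ j := ⟨m, by linarith⟩
    obtain ⟨j', hj'min, hspec⟩ :
        ∃ j' : ℕ, (∀ k < j', ¬ (2 * r ≤ δ * 2 ^ k)) ∧ 2 * r ≤ δ * 2 ^ j' :=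
      ⟨Nat.find hex, fun k hk => Nat.find_min hex hk, Nat.find_spec hex⟩
    have hj'm : j' ≤ m := by
      by_contra hcon
      push_neg at hcon
      exact (hj'min m hcon) (by linarith)
    have hj'pos : 0 < j' := by
      rcases Nat.eq_zero_or_pos j' with h0 | h
      · exfalso
        rw [h0] at hspec
        norm_num at hspec
        linarith
      · exact h
    have hlow : δ * 2 ^ (j' - 1) < 2 * r := by
      have := hj'min (j' - 1) (by omega)
      linarith [not_le.mp this]
    have h4r : δ * 2 ^ j' < 4 * r := by
      have hp : (2:ℝ) ^ j' = 2 * 2 ^ (j' - 1) := by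
        rw [← pow_succ']
        congr 1
        omega
      rw [hp]
      linarith
    set qq : Fin n → ℤ := fun i => ⌊(x i - r) / (δ * 2 ^ j')⌋ with hqq
    set T : Finset (Fin n → ℤ) := Fintype.piFinset (fun i => ({qq i, qq i + 1} : Finset ℤ)) with hT
    have hTcard : T.card ≤ 2 ^ n := by
      rw [hT, Fintype.card_piFinset]
      calc ∏ i, ({qq i, qq i + 1} : Finset ℤ).card ≤ ∏ _i : Fin n, 2 :=
          Finset.prod_le_prod' (fun i _ => (Finset.card_insert_le _ _).trans (by simp))
        _ = 2 ^ n := by rw [Finset.prod_const, Finset.card_univ, Fintype.card_fin]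
    have hsp : (0:ℝ) < δ * 2 ^ j' := by positivity
    have hcover : ∀ y ∈ Ffin, y ∈ closedBall x r → idx δ j' y ∈ T := by
      intro y _ hyball
      rw [hT, Fintype.mem_piFinset]
      intro i
      have hd : |y i - x i| ≤ r := (coord_le_dist y x i).trans (mem_closedBall.mp hyball)
      have hd1 : x i - r ≤ y i := by
        have := abs_le.mp hd
        linarith [this.1]
      have hd2 : y i ≤ x i + r := by
        have := abs_le.mp hd
        linarith [this.2]
      have hmono : qq i ≤ ⌊y i / (δ * 2 ^ j')⌋ := Int.floor_mono (by gcongr)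
      have hq1 : x i - r < ((qq i : ℝ) + 1) * (δ * 2 ^ j') := by
        have := Int.lt_floor_add_one ((x i - r) / (δ * 2 ^ j'))
        rw [div_lt_iff₀ hsp] at this
        exact this
      have hup : ⌊y i / (δ * 2 ^ j')⌋ < qq i + 2 := by
        rw [Int.floor_lt]
        rw [div_lt_iff₀ hsp]
        push_cast
        nlinarith
      have hidx : idx δ j' y i = ⌊y i / (δ * 2 ^ j')⌋ := rfl
      simp only [Finset.mem_insert, Finset.mem_singleton, hidx]
      omega
    have hconv : (((Ffin : Set (Eucl n))) ∩ closedBall x r).ncard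
        = (Ffin.filter (fun y => y ∈ closedBall x r)).card := by
      rw [← Set.ncard_coe_finset]
      congr 1
      ext y
      simp only [Finset.coe_filter, Set.mem_inter_iff, Finset.mem_coe, Set.mem_setOf_eq]
    rw [hconv]
    have hsub3 : Ffin.filter (fun y => y ∈ closedBall x r)
        ⊆ T.biUnion (fun z'' => Ffin.filter (fun y => idx δ j' y = z'')) := by
      intro y hy
      rw [Finset.mem_filter] at hy
      exact Finset.mem_biUnion.mpr ⟨_, hcover y hy.1 hy.2, Finset.mem_filter.mpr ⟨hy.1, rfl⟩⟩
    have hbound1 : ((Ffin.filter (fun y => y ∈ closedBall x r)).card : ℝ)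
        ≤ ∑ z'' ∈ T, ((Ffin.filter (fun y => idx δ j' y = z'')).card : ℝ) := by
      have h5 := (Finset.card_le_card hsub3).trans Finset.card_biUnion_le
      exact_mod_cast h5
    have hterm : ∀ z'' ∈ T, ((Ffin.filter (fun y => idx δ j' y = z'')).card : ℝ)
        ≤ 2 * ((2:ℝ) ^ j') ^ a := by
      intro z'' _
      refine le_trans ?_ (hcnt j' hj'm z'')
      exact_mod_cast Finset.card_le_card (Finset.filter_subset_filter _ hFfinsub)
    have hfinal : ((Ffin.filter (fun y => y ∈ closedBall x r)).card : ℝ)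
        ≤ (2:ℝ) ^ n * (2 * ((2:ℝ) ^ j') ^ a) := by
      refine hbound1.trans ?_
      calc ∑ z'' ∈ T, ((Ffin.filter (fun y => idx δ j' y = z'')).card : ℝ)
          ≤ ∑ _z'' ∈ T, 2 * ((2:ℝ) ^ j') ^ a := Finset.sum_le_sum hterm
        _ = (T.card : ℝ) * (2 * ((2:ℝ) ^ j') ^ a) := by rw [Finset.sum_const, nsmul_eq_mul]
        _ ≤ (2:ℝ) ^ n * (2 * ((2:ℝ) ^ j') ^ a) := by
            have hT2 : (T.card : ℝ) ≤ (2:ℝ) ^ n := by exact_mod_cast hTcard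
            have : (0:ℝ) ≤ 2 * ((2:ℝ) ^ j') ^ a := by positivity
            nlinarith
    have hr0 : (0:ℝ) < r := lt_of_lt_of_le hδ hδr
    have hpow : ((2:ℝ) ^ j') ^ a ≤ (4:ℝ) ^ a * (r / δ) ^ a := by
      rw [← Real.mul_rpow (by norm_num) (div_nonneg hr0.le hδ.le)]
      refine Real.rpow_le_rpow (by positivity) ?_ ha.le
      rw [show (4:ℝ) * (r / δ) = (4 * r) / δ from by ring, le_div_iff₀ hδ]
      nlinarith
    calc ((Ffin.filter (fun y => y ∈ closedBall x r)).card : ℝ)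
        ≤ (2:ℝ) ^ n * (2 * ((2:ℝ) ^ j') ^ a) := hfinal
      _ ≤ (2:ℝ) ^ n * (2 * ((4:ℝ) ^ a * (r / δ) ^ a)) := by
          have h0 : (0:ℝ) ≤ (2:ℝ) ^ n := by positivity
          nlinarith
      _ = 2 ^ (n+1) * (4:ℝ) ^ a * (r / δ) ^ a := by ring
  · -- cardinality
    have hδa : (0:ℝ) < δ ^ a := Real.rpow_pos_of_pos hδ a
    have h3n : (F₀.card : ℝ) ≤ 3 ^ n * (Ffin.card : ℝ) := by
      rw [div_le_iff₀ (by positivity : (0:ℝ) < 3 ^ n)] at hcc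
      rw [hFfin]
      linarith
    rw [Real.rpow_neg hδ.le]
    have hstep : C₂ * (F₀.card : ℝ) * δ ^ a ≤ C₂ * (3 ^ n * (Ffin.card : ℝ)) * δ ^ a :=
      mul_le_mul_of_nonneg_right (mul_le_mul_of_nonneg_left h3n hC₂.le) hδa.le
    have hκ2 : κ ≤ 2 * C₂ * 3 ^ n * ((Ffin.card : ℝ) * δ ^ a) := by nlinarith
    calc (2 * C₂ * 3 ^ n)⁻¹ * (κ * (δ ^ a)⁻¹)
        ≤ (2 * C₂ * 3 ^ n)⁻¹ * ((2 * C₂ * 3 ^ n * ((Ffin.card : ℝ) * δ ^ a)) * (δ ^ a)⁻¹) := by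
          refine mul_le_mul_of_nonneg_left ?_ (by positivity)
          exact mul_le_mul_of_nonneg_right hκ2 (by positivity)
      _ = (Ffin.card : ℝ) := by field_simp
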